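/- Let n ≥ 1 and let an unambiguous complete product basis be given. Then: (a) every outcome string a ∈ ∏_k A_k occurs as the outcome string a^j of exactly one event j, so there is a unique function w : ∏_k A_k → ∏_k X_k with w(a^j) = x^j for every event j; and (b) this unique induced function w is an n-partite process function: for every family f = (f_k)_k of maps f_k : X_k → A_k there is exactly one x ∈ ∏_k X_k with w(f(x)) = x. -/

import Mathlib

noncomputable section
open scoped BigOperators

private def fixEquiv {α β : Type*} [DecidableEq α] (x0 : α) (b0 : β) :
    {g : α → β // g x0 = b0} ≃ ({y : α // y ≠ x0} → β) where
  toFun g y := g.1 y.1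
  invFun h := ⟨fun y => if hy : y = x0 then b0 else h ⟨y, hy⟩, by simp⟩
  left_inv g := by
    apply Subtype.ext
    funext y
    by_cases hy : y = x0
    · subst hy; simp [g.2]
    · simp [hy]
  right_inv h := by
    funext y
    simp [y.2]

private theorem card_fix {α β : Type} [DecidableEq α] [DecidableEq β] [Fintype α] [Fintype β]
    (x0 : α) (b0 : β) :
    Fintype.card {g : α → β // g x0 = b0} = Fintype.card β ^ (Fintype.card α - 1) := by
  rw [Fintype.card_congr (fixEquiv x0 b0), Fintype.card_fun]
  congr 1
  have : Fintype.card {y : α // ¬ (y = x0)} = Fintype.card α - 1 := by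
    rw [Fintype.card_subtype_compl, Fintype.card_subtype_eq]
  simpa using this

/-- A (multipartite) process function: for every local intervention
`f = (f_k)_k` there is exactly one fixed point `x` with `w (f x) = x`. -/
def IsProcessFunction {ι : Type} {A X : ι → Type}
    (w : (∀ k, A k) → ∀ k, X k) : Prop :=
  ∀ f : ∀ k, X k → A k, ∃! x : ∀ k, X k, (w fun k => f k (x k)) = x

/-- **Theorem 3: any unambiguous complete joint `n`-partite product basis
determines a unique `n`-partite process function**: (a) every outcome string
is the outcome string of exactly one event, so there is a unique function `w`
with `w(aʲ) = xʲ` for every event; and (b) this induced function is an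
`n`-partite process function. -/
theorem unambiguous_basis_determines_processFunction
    -- `n` parties with local dimensions `d k`
    {n : ℕ} (hn : 1 ≤ n) (d : Fin n → ℕ) (hd : ∀ k, 1 ≤ d k)
    -- outcome sets `A k` with `|A k| = d k`, finite nonempty setting sets `X k`
    (A : Fin n → Type) [∀ k, Fintype (A k)] [∀ k, DecidableEq (A k)]
    (hA : ∀ k, Fintype.card (A k) = d k)
    (X : Fin n → Type) [∀ k, Fintype (X k)] [∀ k, Nonempty (X k)]
    [∀ k, DecidableEq (X k)]
    -- local vectors `|(a_k|x_k)⟩`, an orthonormal basis for each setting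
    (v : ∀ k : Fin n, X k → A k → EuclideanSpace ℂ (Fin (d k)))
    (hv : ∀ (k : Fin n) (x : X k), Orthonormal ℂ (v k x))
    -- `N = ∏_k d_k` pairwise distinct events with pairwise orthogonal
    -- product vectors (a complete product basis)
    {N : ℕ} (hN : N = ∏ k, d k)
    (e : Fin N → (∀ k, A k) × (∀ k, X k))
    (he : Function.Injective e)
    (horth : ∀ j j' : Fin N, j ≠ j' →
      (∏ k : Fin n,
        (inner ℂ (v k ((e j).2 k) ((e j).1 k))
          (v k ((e j').2 k) ((e j').1 k)) : ℂ)) = 0)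
    -- unambiguity: for labels occurring among the events, two distinct local
    -- vectors are orthogonal iff they belong to the same setting
    (hunamb : ∀ (k : Fin n) (a a' : A k) (x x' : X k),
      (∃ j, (e j).1 k = a ∧ (e j).2 k = x) →
      (∃ j, (e j).1 k = a' ∧ (e j).2 k = x') →
      v k x a ≠ v k x' a' →
      ((inner ℂ (v k x a) (v k x' a') : ℂ) = 0 ↔ x = x'))
    :
    (∀ a : ∀ k, A k, ∃! j : Fin N, (e j).1 = a) ∧
    (∃! w : (∀ k, A k) → ∀ k, X k, ∀ j : Fin N, w ((e j).1) = (e j).2) ∧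
    (∀ w : (∀ k, A k) → ∀ k, X k,
      (∀ j : Fin N, w ((e j).1) = (e j).2) → IsProcessFunction w) := by
  classical
  -- key lemma extracting a coordinate with equal settings but unequal vectors
  have key : ∀ j j' : Fin N, j ≠ j' → ∃ k : Fin n,
      (e j).2 k = (e j').2 k ∧
      v k ((e j).2 k) ((e j).1 k) ≠ v k ((e j').2 k) ((e j').1 k) := by
    intro j j' hne
    have h0 := horth j j' hne
    rw [Finset.prod_eq_zero_iff] at h0
    obtain ⟨k, -, hk⟩ := h0
    have hvne : v k ((e j).2 k) ((e j).1 k) ≠ v k ((e j').2 k) ((e j').1 k) := by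
      intro hEq
      rw [hEq] at hk
      have hz := inner_self_eq_zero.mp hk
      have h1 := (hv k ((e j').2 k)).1 ((e j').1 k)
      rw [hz] at h1
      simp at h1
    exact ⟨k, (hunamb k ((e j).1 k) ((e j').1 k) ((e j).2 k) ((e j').2 k)
      ⟨j, rfl, rfl⟩ ⟨j', rfl, rfl⟩ hvne).mp hk, hvne⟩
  -- the outcome map is injective
  have hinj : Function.Injective (fun j : Fin N => (e j).1) := by
    intro j j' h
    by_contra hne
    obtain ⟨k, hx, hvne⟩ := key j j' hne
    apply hvne
    rw [hx, show (e j).1 = (e j').1 from h]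
  have hcard : Fintype.card (∀ k, A k) = N := by
    rw [Fintype.card_pi, hN]
    exact Finset.prod_congr rfl fun k _ => hA k
  have hbij : Function.Bijective (fun j : Fin N => (e j).1) := by
    rw [Fintype.bijective_iff_injective_and_card]
    exact ⟨hinj, by simp [hcard]⟩
  have parta : ∀ a : ∀ k, A k, ∃! j : Fin N, (e j).1 = a := by
    intro a
    obtain ⟨j, hj⟩ := hbij.2 a
    exact ⟨j, hj, fun j' hj' => hinj (hj'.trans hj.symm)⟩
  -- uniqueness of consistent events
  have huniqcons : ∀ (f : ∀ k, X k → A k) (j j' : Fin N),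
      (∀ k, (e j).1 k = f k ((e j).2 k)) →
      (∀ k, (e j').1 k = f k ((e j').2 k)) → j = j' := by
    intro f j j' hj hj'
    by_contra hne
    obtain ⟨k, hx, hvne⟩ := key j j' hne
    apply hvne
    rw [hx, hj k, hj' k, hx]
  -- existence of a consistent event, by counting
  have hexcons : ∀ f : ∀ k, X k → A k, ∃ j : Fin N,
      ∀ k, (e j).1 k = f k ((e j).2 k) := by
    set F := ∀ k, X k → A k with hF
    set S : Fin N → Finset F :=
      fun j => Finset.univ.filter (fun f => ∀ k, f k ((e j).2 k) = (e j).1 k) with hS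
    have hScard : ∀ j, (S j).card = ∏ k, d k ^ (Fintype.card (X k) - 1) := by
      intro j
      have : (S j).card
          = Fintype.card {f : F // ∀ k, f k ((e j).2 k) = (e j).1 k} := by
        rw [Fintype.card_subtype]
      have hequiv : {f : F // ∀ k, f k ((e j).2 k) = (e j).1 k}
          ≃ ∀ k, {g : X k → A k // g ((e j).2 k) = (e j).1 k} :=
        Equiv.subtypePiEquivPi (β := fun k => X k → A k)
          (p := fun k g => g ((e j).2 k) = (e j).1 k)
      rw [this, Fintype.card_congr hequiv, Fintype.card_pi]
      exact Finset.prod_congr rfl fun k _ => by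
        rw [card_fix ((e j).2 k) ((e j).1 k), hA k]
    have hdisj : ((Finset.univ : Finset (Fin N)) : Set (Fin N)).PairwiseDisjoint S := by
      intro j _ j' _ hne
      refine Finset.disjoint_left.mpr ?_
      intro f hf hf'
      rw [hS, Finset.mem_filter] at hf hf'
      exact hne (huniqcons f j j' (fun k => (hf.2 k).symm) (fun k => (hf'.2 k).symm))
    have hsum : (Finset.univ.biUnion S).card = N * ∏ k, d k ^ (Fintype.card (X k) - 1) := by
      rw [Finset.card_biUnion hdisj]
      simp [hScard, Finset.sum_const]
    have hcardF : Fintype.card F = N * ∏ k, d k ^ (Fintype.card (X k) - 1) := by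
      rw [Fintype.card_pi, hN, ← Finset.prod_mul_distrib]
      refine Finset.prod_congr rfl fun k _ => ?_
      rw [Fintype.card_fun, hA k]
      have hx1 : 1 ≤ Fintype.card (X k) := Fintype.card_pos
      conv_lhs => rw [← Nat.sub_add_cancel hx1, pow_succ]
      ring
    have huniv : Finset.univ.biUnion S = (Finset.univ : Finset F) := by
      apply Finset.eq_univ_of_card
      rw [hsum, ← hcardF]
    intro f
    have hf : f ∈ Finset.univ.biUnion S := by rw [huniv]; exact Finset.mem_univ f
    rw [Finset.mem_biUnion] at hf
    obtain ⟨j, -, hj⟩ := hf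
    rw [hS, Finset.mem_filter] at hj
    exact ⟨j, fun k => (hj.2 k).symm⟩
  -- the induced function w
  let E : Fin N ≃ (∀ k, A k) := Equiv.ofBijective _ hbij
  refine ⟨parta, ⟨fun a => (e (E.symm a)).2, ?_, ?_⟩, ?_⟩
  · intro j
    show (e (E.symm (E j))).2 = (e j).2
    rw [Equiv.symm_apply_apply]
  · intro w' hw'
    funext a
    obtain ⟨j, hj, -⟩ := parta a
    have h1 : w' a = (e j).2 := by rw [← hj]; exact hw' j
    have h2 : (e (E.symm a)).2 = (e j).2 := by
      rw [← hj]
      show (e (E.symm (E j))).2 = (e j).2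
      rw [Equiv.symm_apply_apply]
    rw [h1, h2]
  · intro w hw f
    obtain ⟨j, hj⟩ := hexcons f
    refine ⟨(e j).2, ?_, ?_⟩
    · show (w fun k => f k ((e j).2 k)) = (e j).2
      rw [show (fun k => f k ((e j).2 k)) = (e j).1 from funext fun k => (hj k).symm]
      exact hw j
    · intro y hy
      obtain ⟨j', hj', -⟩ := parta (fun k => f k (y k))
      have hy' : y = (e j').2 := by
        rw [← hy, ← hj', hw j']
      have hcons : ∀ k, (e j').1 k = f k ((e j').2 k) := by
        intro k
        rw [← hy', congrFun hj' k]
      rw [hy', huniqcons f j' j hcons hj]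

end
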